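/- Let q be odd, σ : F_q → F_q a permutation, and x = (j, σ(j)) a point of Γ_σ participating in no collinear quadruple. For i = 1,2,3, let M_i be the set of slopes m ∈ F_q* such that the line through x with slope m contains exactly i points of Γ_σ. Then |M_1| = |M_3| and ∏_{m ∈ M_1} m = -∏_{m ∈ M_3} m. -/

import Mathlib

/-- Number of points of the graph of `σ` on the line through `x` of slope `m`. -/
def lineCount {F : Type*} [Field F] [Fintype F] [DecidableEq F]
    (σ : F → F) (x : F × F) (m : F) : ℕ :=
  (Finset.univ.filter (fun i : F => σ i - x.2 = m * (i - x.1))).card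

lemma aux_prod_shift {F : Type*} [Field F] [Fintype F] [DecidableEq F]
    (f : F → F) (hf : Function.Bijective f) (a : F) :
    ∏ i ∈ Finset.univ.filter (fun i => i ≠ a), (f i - f a)
      = ∏ t ∈ Finset.univ.filter (fun t => t ≠ (0:F)), t := by
  refine Finset.prod_nbij (fun i => f i - f a) ?_ ?_ ?_ ?_
  · intro i hi
    simp only [Finset.mem_filter, Finset.mem_univ, true_and] at hi ⊢
    exact sub_ne_zero.mpr fun h => hi (hf.injective h)
  · intro i _ i' _ h
    exact hf.injective (sub_left_inj.mp h)
  · intro t ht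
    simp only [Finset.coe_filter, Set.mem_setOf_eq, Finset.mem_univ, true_and] at ht
    obtain ⟨i, hi⟩ := hf.surjective (t + f a)
    refine ⟨i, ?_, ?_⟩
    · simp only [Finset.coe_filter, Set.mem_setOf_eq, Finset.mem_univ, true_and]
      rintro rfl
      exact ht (add_eq_right.mp hi.symm)
    · simp [hi]
  · intro i _; rfl

lemma aux_wilson {F : Type*} [Field F] [Fintype F] [DecidableEq F] :
    ∏ t ∈ Finset.univ.filter (fun t => t ≠ (0:F)), t = -1 := by
  have h1 : ∏ t ∈ Finset.univ.filter (fun t => t ≠ (0:F)), t = ∏ u : Fˣ, (u : F) := by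
    refine (Finset.prod_nbij (fun u : Fˣ => (u : F)) ?_ ?_ ?_ ?_).symm
    · intro u _
      simp only [Finset.mem_filter, Finset.mem_univ, true_and]
      exact Units.ne_zero u
    · intro u _ v _ h; exact Units.ext h
    · intro t ht
      simp only [Finset.coe_filter, Set.mem_setOf_eq, Finset.mem_univ, true_and] at ht
      exact ⟨Units.mk0 t ht, by simp, rfl⟩
    · intro u _; rfl
  rw [h1, show (∏ u : Fˣ, (u:F)) = ((∏ u : Fˣ, u : Fˣ) : F) from
      (map_prod (Units.coeHom F) _ _).symm,
    FiniteField.prod_univ_units_id_eq_neg_one]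
  simp

/-- If `x = (j, σ j)` participates in no collinear quadruple (every line through
`x` of nonzero slope meets the graph in at most 3 points), and `M i` is the set of
nonzero slopes whose line through `x` meets the graph in exactly `i` points, then
`|M 1| = |M 3|` and `∏_{m ∈ M 1} m = - ∏_{m ∈ M 3} m`. -/
theorem M1_card_eq_M3_card_and_prod {F : Type*} [Field F] [Fintype F] [DecidableEq F]
    (hq : Odd (Fintype.card F)) (σ : F → F) (hσ : Function.Bijective σ) (j : F)
    (hquad : ∀ m : F, m ≠ 0 → lineCount σ (j, σ j) m ≤ 3) :
    (Finset.univ.filter (fun m : F => m ≠ 0 ∧ lineCount σ (j, σ j) m = 1)).card =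
      (Finset.univ.filter (fun m : F => m ≠ 0 ∧ lineCount σ (j, σ j) m = 3)).card ∧
    ∏ m ∈ Finset.univ.filter (fun m : F => m ≠ 0 ∧ lineCount σ (j, σ j) m = 1), m =
      - ∏ m ∈ Finset.univ.filter (fun m : F => m ≠ 0 ∧ lineCount σ (j, σ j) m = 3), m := by
  classical
  set c : F → ℕ := lineCount σ (j, σ j) with hc
  set S : Finset F := Finset.univ.filter (fun m => m ≠ (0:F)) with hS
  set T : Finset F := Finset.univ.filter (fun i => i ≠ j) with hT
  set φ : F → F := fun i => (σ i - σ j) * (i - j)⁻¹ with hφ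
  have hjmem : ∀ m : F,
      j ∈ Finset.univ.filter (fun i : F => σ i - (j, σ j).2 = m * (i - (j, σ j).1)) := by
    intro m; simp
  have hcpos : ∀ m : F, 1 ≤ c m := by
    intro m
    rw [hc]
    unfold lineCount
    exact Finset.card_pos.mpr ⟨j, hjmem m⟩
  have hmaps : ∀ i ∈ T, φ i ∈ S := by
    intro i hi
    rw [hT, Finset.mem_filter] at hi
    rw [hS, Finset.mem_filter]
    refine ⟨Finset.mem_univ _, ?_⟩
    exact mul_ne_zero (sub_ne_zero.mpr fun h => hi.2 (hσ.injective h))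
      (inv_ne_zero (sub_ne_zero.mpr hi.2))
  have hfiber : ∀ m ∈ S, (T.filter (fun i => φ i = m)).card = c m - 1 := by
    intro m hm
    have hset : T.filter (fun i => φ i = m)
        = (Finset.univ.filter
            (fun i : F => σ i - (j, σ j).2 = m * (i - (j, σ j).1))).erase j := by
      ext i
      simp only [hT, hφ, Finset.mem_filter, Finset.mem_erase, Finset.mem_univ, true_and,
        Finset.filter_congr_decidable]
      constructor
      · rintro ⟨hij, hφi⟩
        have hne : i - j ≠ 0 := sub_ne_zero.mpr hij
        refine ⟨hij, ?_⟩
        rw [← div_eq_mul_inv, div_eq_iff hne] at hφi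
        simpa [mul_comm] using hφi
      · rintro ⟨hij, heq⟩
        have hne : i - j ≠ 0 := sub_ne_zero.mpr hij
        refine ⟨hij, ?_⟩
        replace heq : σ i - σ j = m * (i - j) := heq
        rw [heq]
        field_simp
    rw [hset, Finset.card_erase_of_mem (hjmem m), hc]
    rfl
  have hTcard : T.card = Fintype.card F - 1 := by
    rw [hT, Finset.filter_ne', Finset.card_erase_of_mem (Finset.mem_univ j),
      Finset.card_univ]
  have hScard : S.card = Fintype.card F - 1 := by
    rw [hS, Finset.filter_ne', Finset.card_erase_of_mem (Finset.mem_univ (0:F)),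
      Finset.card_univ]
  have hsum : ∑ m ∈ S, (c m - 1) = Fintype.card F - 1 := by
    calc ∑ m ∈ S, (c m - 1) = ∑ m ∈ S, (T.filter (fun i => φ i = m)).card :=
          Finset.sum_congr rfl (fun m hm => (hfiber m hm).symm)
      _ = T.card := (Finset.card_eq_sum_card_fiberwise hmaps).symm
      _ = Fintype.card F - 1 := hTcard
  have hW : ∏ t ∈ S, t = -1 := by rw [hS]; exact aux_wilson
  have hWne : (∏ t ∈ S, t) ≠ 0 := by rw [hW]; simp
  have hprodA : ∏ m ∈ S, m ^ (c m - 1) = 1 := by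
    have h2 : ∀ m ∈ S, ∏ i ∈ T.filter (fun i => φ i = m), φ i = m ^ (c m - 1) := by
      intro m hm
      rw [← hfiber m hm]
      rw [Finset.prod_congr rfl (fun i hi => (Finset.mem_filter.mp hi).2),
        Finset.prod_const]
    have e1 : ∏ i ∈ T, (σ i - σ j) = ∏ t ∈ S, t := by
      rw [hT, hS]; exact aux_prod_shift σ hσ j
    have e2 : ∏ i ∈ T, (i - j) = ∏ t ∈ S, t := by
      rw [hT, hS]; exact aux_prod_shift id Function.bijective_id j
    have h3 : ∏ i ∈ T, φ i = 1 := by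
      rw [hφ]
      rw [Finset.prod_mul_distrib, Finset.prod_inv_distrib, e1, e2,
        mul_inv_cancel₀ hWne]
    calc ∏ m ∈ S, m ^ (c m - 1)
        = ∏ m ∈ S, ∏ i ∈ T.filter (fun i => φ i = m), φ i :=
          (Finset.prod_congr rfl h2).symm
      _ = ∏ i ∈ T, φ i := Finset.prod_fiberwise_of_maps_to hmaps φ
      _ = 1 := h3
  -- classify slopes by their count
  have hc3 : ∀ m ∈ S, c m ∈ ({1, 2, 3} : Finset ℕ) := by
    intro m hm
    rw [hS, Finset.mem_filter] at hm
    have h1 := hcpos m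
    have h2 := hquad m hm.2
    simp only [Finset.mem_insert, Finset.mem_singleton]
    omega
  have hMk : ∀ k : ℕ, S.filter (fun m => c m = k)
      = Finset.univ.filter (fun m : F => m ≠ 0 ∧ c m = k) := by
    intro k; rw [hS, Finset.filter_filter]
  have h123 : ({1, 2, 3} : Finset ℕ) = insert 1 (insert 2 {3}) := rfl
  have hm1 : (1 : ℕ) ∉ (insert 2 {3} : Finset ℕ) := by decide
  have hm2 : (2 : ℕ) ∉ ({3} : Finset ℕ) := by decide
  set a := (S.filter (fun m => c m = 1)).card with ha
  set b := (S.filter (fun m => c m = 2)).card with hb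
  set d := (S.filter (fun m => c m = 3)).card with hd
  have hcard_split : S.card = a + b + d := by
    rw [Finset.card_eq_sum_card_fiberwise hc3, h123,
      Finset.sum_insert hm1, Finset.sum_insert hm2, Finset.sum_singleton]
    omega
  have hsum_eval : ∑ m ∈ S, (c m - 1) = b + 2 * d := by
    rw [← Finset.sum_fiberwise_of_maps_to hc3 (fun m => c m - 1), h123,
      Finset.sum_insert hm1, Finset.sum_insert hm2, Finset.sum_singleton]
    have e : ∀ k : ℕ, ∑ m ∈ S.filter (fun m => c m = k), (c m - 1)
        = (k - 1) * (S.filter (fun m => c m = k)).card := by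
      intro k
      rw [Finset.sum_congr rfl (fun m hm => by rw [(Finset.mem_filter.mp hm).2]),
        Finset.sum_const, smul_eq_mul, mul_comm]
    rw [e 1, e 2, e 3, ← ha, ← hb, ← hd]
    omega
  have hcards : a = d := by
    have := hScard
    omega
  -- products
  set P1 := ∏ m ∈ S.filter (fun m => c m = 1), m with hP1
  set P2 := ∏ m ∈ S.filter (fun m => c m = 2), m with hP2
  set P3 := ∏ m ∈ S.filter (fun m => c m = 3), m with hP3
  have hprod_split : P1 * P2 * P3 = -1 := by
    rw [← hW, ← Finset.prod_fiberwise_of_maps_to hc3 (fun m => m), h123,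
      Finset.prod_insert hm1, Finset.prod_insert hm2, Finset.prod_singleton,
      ← hP1, ← hP2, ← hP3]
    ring
  have hpow_eval : P2 * P3 ^ 2 = 1 := by
    rw [← hprodA, ← Finset.prod_fiberwise_of_maps_to hc3 (fun m => m ^ (c m - 1)), h123,
      Finset.prod_insert hm1, Finset.prod_insert hm2, Finset.prod_singleton]
    have e : ∀ k : ℕ, ∏ m ∈ S.filter (fun m => c m = k), m ^ (c m - 1)
        = (∏ m ∈ S.filter (fun m => c m = k), m) ^ (k - 1) := by
      intro k
      rw [Finset.prod_congr rfl (fun m hm => by rw [(Finset.mem_filter.mp hm).2]),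
        Finset.prod_pow]
    rw [e 1, e 2, e 3, ← hP1, ← hP2, ← hP3]
    norm_num
  constructor
  · rw [← hMk 1, ← hMk 3, ← ha, ← hd]; exact hcards
  · rw [← hMk 1, ← hMk 3, ← hP1, ← hP3]
    calc P1 = P1 * (P2 * P3 ^ 2) := by rw [hpow_eval]; ring
      _ = (P1 * P2 * P3) * P3 := by ring
      _ = -P3 := by rw [hprod_split]; ring
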